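/- Let X be a real N-by-P matrix and L a real P-by-K matrix with K ≤ min(N,P). Then the minimum over N-by-K matrices Z with orthonormal columns of ||X - Z L^T||_F^2 equals the squared Bures-Wasserstein distance between X^T X and L L^T, i.e., tr(X^T X) - 2 tr(sqrt(sqrt(X^T X) L L^T sqrt(X^T X))) + tr(L L^T). -/

import Mathlib

open Matrix

noncomputable def frobSq {n p : ℕ} (A : Matrix (Fin n) (Fin p) ℝ) : ℝ := ∑ i, ∑ j, (A i j)^2

open Classical in
/-- The unique positive semidefinite square root of a PSD matrix (junk value `0` otherwise). -/
noncomputable def msqrt {p : ℕ} (M : Matrix (Fin p) (Fin p) ℝ) : Matrix (Fin p) (Fin p) ℝ :=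
  if h : M.PosSemidef then
    (h.1.eigenvectorUnitary : Matrix (Fin p) (Fin p) ℝ) * diagonal (Real.sqrt ∘ h.1.eigenvalues) *
      (star h.1.eigenvectorUnitary : Matrix (Fin p) (Fin p) ℝ) else 0

/-- Squared Bures-Wasserstein distance. -/
noncomputable def BWsq {p : ℕ} (A B : Matrix (Fin p) (Fin p) ℝ) : ℝ :=
  A.trace - 2 * (msqrt (msqrt A * B * msqrt A)).trace + B.trace

section PsdSqrtPort

open scoped MatrixOrder

/-- The PSD square root of a PSD matrix (port of the removed Mathlib API). -/
noncomputable def Matrix.PosSemidef.sqrt {p : ℕ} {M : Matrix (Fin p) (Fin p) ℝ}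
    (_h : M.PosSemidef) : Matrix (Fin p) (Fin p) ℝ := msqrt M

lemma Matrix.PosSemidef.sqrt_eq_cfc {p : ℕ} {M : Matrix (Fin p) (Fin p) ℝ}
    (h : M.PosSemidef) : h.sqrt = CFC.sqrt M := by
  rw [CFC.sqrt_eq_cfc, cfc_nnreal_eq_real _ M (nonneg_iff_posSemidef.mpr h), h.1.cfc_eq]
  simp only [Matrix.PosSemidef.sqrt, msqrt, dif_pos h, IsHermitian.cfc]
  simp [Function.comp_def]
  simp [max_eq_left (h.eigenvalues_nonneg _)]

lemma Matrix.PosSemidef.posSemidef_sqrt {p : ℕ} {M : Matrix (Fin p) (Fin p) ℝ}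
    (h : M.PosSemidef) : h.sqrt.PosSemidef := by
  rw [h.sqrt_eq_cfc]
  exact nonneg_iff_posSemidef.mp (CFC.sqrt_nonneg M)

lemma Matrix.PosSemidef.sqrt_mul_self {p : ℕ} {M : Matrix (Fin p) (Fin p) ℝ}
    (h : M.PosSemidef) : h.sqrt * h.sqrt = M := by
  rw [h.sqrt_eq_cfc]
  exact CFC.sqrt_mul_sqrt_self M (nonneg_iff_posSemidef.mpr h)

lemma Matrix.PosSemidef.eq_sqrt_of_sq_eq {p : ℕ} {A B : Matrix (Fin p) (Fin p) ℝ}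
    (hA : A.PosSemidef) (hB : B.PosSemidef) (hAB : A ^ 2 = B) : A = hB.sqrt := by
  rw [hB.sqrt_eq_cfc]
  exact (CFC.sqrt_unique (by rw [← pow_two]; exact hAB) (nonneg_iff_posSemidef.mpr hA)).symm

end PsdSqrtPort

namespace StmtAux

lemma msqrt_eq {p : ℕ} {M : Matrix (Fin p) (Fin p) ℝ} (h : M.PosSemidef) :
    msqrt M = h.sqrt := rfl

lemma tmul_psd {m k : ℕ} (C : Matrix (Fin m) (Fin k) ℝ) : (Cᵀ * C).PosSemidef := by
  have := Matrix.posSemidef_conjTranspose_mul_self C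
  rwa [conjTranspose_eq_transpose_of_trivial] at this

lemma real_transpose_eq {m k : ℕ} (C : Matrix (Fin m) (Fin k) ℝ) : Cᴴ = Cᵀ :=
  conjTranspose_eq_transpose_of_trivial C

lemma psd_transpose {k : ℕ} {S : Matrix (Fin k) (Fin k) ℝ} (h : S.PosSemidef) : Sᵀ = S := by
  have := h.1
  rwa [Matrix.IsHermitian, real_transpose_eq] at this

lemma psd_trace_nonneg {k : ℕ} {S : Matrix (Fin k) (Fin k) ℝ} (h : S.PosSemidef) :
    0 ≤ S.trace := by
  exact h.trace_nonneg

lemma sqrt_congr {k : ℕ} {A B : Matrix (Fin k) (Fin k) ℝ} (h : A = B) (hA : A.PosSemidef)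
    (hB : B.PosSemidef) : hA.sqrt = hB.sqrt := by subst h; rfl

lemma frobSq_eq_trace {n p : ℕ} (A : Matrix (Fin n) (Fin p) ℝ) : frobSq A = (Aᵀ * A).trace := by
  rw [frobSq, Matrix.trace]
  simp only [Matrix.diag_apply, Matrix.mul_apply, Matrix.transpose_apply, sq]
  exact Finset.sum_comm

lemma trace_transpose_mul_eq_sum {n p : ℕ} (A B : Matrix (Fin n) (Fin p) ℝ) :
    (Aᵀ * B).trace = ∑ q : Fin n × Fin p, A q.1 q.2 * B q.1 q.2 := by
  rw [Matrix.trace, Fintype.sum_prod_type]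
  simp only [Matrix.diag_apply, Matrix.mul_apply, Matrix.transpose_apply]
  exact Finset.sum_comm.symm

/-- Cauchy-Schwarz style bound: `tr(Zᵀ Z₀ S) ≤ tr S`. -/
lemma trace_mul_le {n k : ℕ} (Z Z₀ : Matrix (Fin n) (Fin k) ℝ)
    (hZ : Zᵀ * Z = 1) (hZ₀ : Z₀ᵀ * Z₀ = 1) {S : Matrix (Fin k) (Fin k) ℝ}
    (hS : S.PosSemidef) : (Zᵀ * Z₀ * S).trace ≤ S.trace := by
  set R := hS.sqrt with hRdef
  have hRt : Rᵀ = R := psd_transpose hS.posSemidef_sqrt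
  have hRR : R * R = S := hS.sqrt_mul_self
  have hgram : ∀ Y : Matrix (Fin n) (Fin k) ℝ, Yᵀ * Y = 1 → (Y * R)ᵀ * (Y * R) = S := by
    intro Y hY
    rw [Matrix.transpose_mul, Matrix.mul_assoc, ← Matrix.mul_assoc Yᵀ Y R, hY,
      Matrix.one_mul, hRt, hRR]
  have htr : (Zᵀ * Z₀ * S).trace = ((Z * R)ᵀ * (Z₀ * R)).trace := by
    rw [Matrix.transpose_mul, hRt, ← hRR, ← Matrix.mul_assoc (Zᵀ * Z₀) R R,
      Matrix.trace_mul_comm (Zᵀ * Z₀ * R) R, Matrix.mul_assoc R Zᵀ (Z₀ * R),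
      ← Matrix.mul_assoc Zᵀ Z₀ R, ← Matrix.mul_assoc R (Zᵀ * Z₀) R]
  rw [htr, trace_transpose_mul_eq_sum]
  have cs := Finset.sum_mul_sq_le_sq_mul_sq Finset.univ
    (fun q : Fin n × Fin k => (Z * R) q.1 q.2) (fun q => (Z₀ * R) q.1 q.2)
  have e1 : ∑ q : Fin n × Fin k, ((Z * R) q.1 q.2) ^ 2 = S.trace := by
    have := trace_transpose_mul_eq_sum (Z * R) (Z * R)
    rw [hgram Z hZ] at this
    rw [this]
    exact Finset.sum_congr rfl fun q _ => (pow_two _)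
  have e2 : ∑ q : Fin n × Fin k, ((Z₀ * R) q.1 q.2) ^ 2 = S.trace := by
    have := trace_transpose_mul_eq_sum (Z₀ * R) (Z₀ * R)
    rw [hgram Z₀ hZ₀] at this
    rw [this]
    exact Finset.sum_congr rfl fun q _ => (pow_two _)
  rw [e1, e2] at cs
  have h0 := psd_trace_nonneg hS
  nlinarith [cs, h0, sq_nonneg ((∑ q : Fin n × Fin k, (Z * R) q.1 q.2 * (Z₀ * R) q.1 q.2)
    - S.trace), sq_nonneg ((∑ q : Fin n × Fin k, (Z * R) q.1 q.2 * (Z₀ * R) q.1 q.2) + S.trace)]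

lemma frob_expand {n p q : ℕ} (X : Matrix (Fin n) (Fin p) ℝ) (L : Matrix (Fin p) (Fin q) ℝ)
    (Z : Matrix (Fin n) (Fin q) ℝ) (hZ : Zᵀ * Z = 1) :
    frobSq (X - Z * Lᵀ) = (Xᵀ * X).trace + (L * Lᵀ).trace - 2 * (Zᵀ * (X * L)).trace := by
  rw [frobSq_eq_trace, Matrix.transpose_sub, Matrix.transpose_mul, Matrix.transpose_transpose,
    Matrix.sub_mul, Matrix.mul_sub, Matrix.mul_sub, Matrix.trace_sub, Matrix.trace_sub,
    Matrix.trace_sub]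
  have h1 : (Xᵀ * (Z * Lᵀ)).trace = (Zᵀ * (X * L)).trace := by
    rw [← Matrix.mul_assoc Xᵀ Z Lᵀ, Matrix.trace_mul_comm (Xᵀ * Z) Lᵀ,
      ← Matrix.mul_assoc Lᵀ Xᵀ Z, ← Matrix.trace_transpose (Zᵀ * (X * L)),
      Matrix.transpose_mul, Matrix.transpose_transpose, Matrix.transpose_mul]
  have h2 : (L * Zᵀ * X).trace = (Zᵀ * (X * L)).trace := by
    rw [Matrix.trace_mul_comm (L * Zᵀ) X, ← Matrix.mul_assoc X L Zᵀ,
      Matrix.trace_mul_comm (X * L) Zᵀ]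
  have h3 : (L * Zᵀ * (Z * Lᵀ)).trace = (L * Lᵀ).trace := by
    rw [Matrix.mul_assoc L Zᵀ (Z * Lᵀ), ← Matrix.mul_assoc Zᵀ Z Lᵀ, hZ, Matrix.one_mul]
  rw [h1, h2, h3]
  ring

set_option maxHeartbeats 1000000 in
/-- Polar decomposition of a tall rectangular real matrix. -/
lemma exists_polar {m k : ℕ} (hkm : k ≤ m) (C : Matrix (Fin m) (Fin k) ℝ) :
    ∃ U : Matrix (Fin m) (Fin k) ℝ, Uᵀ * U = 1 ∧ C = U * (tmul_psd C).sqrt := by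
  classical
  have hG := tmul_psd C
  have hH : (Cᵀ * C).IsHermitian := hG.1
  set μ : Fin k → ℝ := hH.eigenvalues with hμdef
  have hμ0 : ∀ i, 0 ≤ μ i := fun i => hG.eigenvalues_nonneg i
  set v : Fin k → (Fin k → ℝ) := fun i => ⇑(hH.eigenvectorBasis i) with hvdef
  have key : ∀ i j, (C *ᵥ v i) ⬝ᵥ (C *ᵥ v j) = μ i * (v i ⬝ᵥ v j) := by
    intro i j
    have h1 : (Cᵀ * C) *ᵥ (v i) = μ i • (v i) := hH.mulVec_eigenvectorBasis i
    calc (C *ᵥ v i) ⬝ᵥ (C *ᵥ v j) = ((C *ᵥ v i) ᵥ* C) ⬝ᵥ v j := by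
          rw [dotProduct_mulVec]
      _ = ((Cᵀ * C) *ᵥ v i) ⬝ᵥ v j := by rw [← Matrix.mulVec_transpose, Matrix.mulVec_mulVec]
      _ = μ i * (v i ⬝ᵥ v j) := by rw [h1, smul_dotProduct]; rfl
  have vON : ∀ i j, v i ⬝ᵥ v j = if i = j then 1 else 0 := by
    intro i j
    have := orthonormal_iff_ite.mp hH.eigenvectorBasis.orthonormal i j
    simpa [PiLp.inner_apply, RCLike.inner_apply, dotProduct, mul_comm] using this
  set w : Fin k → EuclideanSpace ℝ (Fin m) :=
    fun i => (Real.sqrt (μ i))⁻¹ • ((WithLp.equiv 2 (Fin m → ℝ)).symm (C *ᵥ v i)) with hwdef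
  have wON : ∀ i j : Fin k, 0 < μ i → 0 < μ j →
      (inner ℝ (w i) (w j) : ℝ) = if i = j then 1 else 0 := by
    intro i j hi hj
    rw [hwdef]
    simp only [inner_smul_left, inner_smul_right, RCLike.conj_to_real]
    have hdot : (inner ℝ ((WithLp.equiv 2 (Fin m → ℝ)).symm (C *ᵥ v i))
        ((WithLp.equiv 2 (Fin m → ℝ)).symm (C *ᵥ v j)) : ℝ) = (C *ᵥ v i) ⬝ᵥ (C *ᵥ v j) := by
      simp [PiLp.inner_apply, RCLike.inner_apply, dotProduct, mul_comm]
    rw [hdot, key i j, vON i j]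
    rcases eq_or_ne i j with rfl | hne
    · rw [if_pos rfl, mul_one, ← mul_assoc, ← mul_inv,
        Real.mul_self_sqrt (hμ0 i), inv_mul_cancel₀ (ne_of_gt hi)]
    · simp [hne]
  -- orthonormal extension
  set s : Set (Fin m) := {j | ∃ h : (j : ℕ) < k, 0 < μ ⟨j, h⟩} with hs
  set v0 : Fin m → EuclideanSpace ℝ (Fin m) :=
    fun j => if h : (j : ℕ) < k then w ⟨j, h⟩ else 0 with hv0
  have hON : Orthonormal ℝ (s.restrict v0) := by
    rw [orthonormal_iff_ite]
    rintro ⟨a, ha, hpa⟩ ⟨c, hc, hpc⟩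
    show inner ℝ (v0 a) (v0 c) = _
    simp only [Set.restrict_apply, hv0, dif_pos ha, dif_pos hc]
    rw [wON _ _ hpa hpc]
    congr 1
    simp only [eq_iff_iff]
    constructor
    · rintro h; exact Subtype.ext (by simpa [Fin.ext_iff] using congrArg Fin.val h)
    · rintro h; exact Fin.ext (by simpa [Fin.ext_iff, Subtype.ext_iff] using h)
  obtain ⟨b, hb⟩ := hON.exists_orthonormalBasis_extension_of_card_eq (by simp)
  have hbw : ∀ i : Fin k, 0 < μ i → b (Fin.castLE hkm i) = w i := by
    intro i hi
    have hmem : (Fin.castLE hkm i) ∈ s := ⟨by simpa using i.isLt, by simpa using hi⟩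
    rw [hb _ hmem]
    simp only [hv0]
    rw [dif_pos (show ((Fin.castLE hkm i : Fin m) : ℕ) < k by simpa using i.isLt)]
    congr 1
  have bON : ∀ i' j' : Fin m, (⇑(b i') : Fin m → ℝ) ⬝ᵥ ⇑(b j') = if i' = j' then 1 else 0 := by
    intro i' j'
    have := orthonormal_iff_ite.mp b.orthonormal i' j'
    simpa [PiLp.inner_apply, RCLike.inner_apply, dotProduct, mul_comm] using this
  -- the matrices
  set W : Matrix (Fin m) (Fin k) ℝ := Matrix.of fun a i => b (Fin.castLE hkm i) a with hW
  set V : Matrix (Fin k) (Fin k) ℝ := (hH.eigenvectorUnitary : Matrix (Fin k) (Fin k) ℝ) with hV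
  set D : Matrix (Fin k) (Fin k) ℝ := Matrix.diagonal (fun i => Real.sqrt (μ i)) with hD
  have hWW : Wᵀ * W = 1 := by
    ext i j
    have hd := bON (Fin.castLE hkm i) (Fin.castLE hkm j)
    simp only [dotProduct] at hd
    simp only [Matrix.mul_apply, Matrix.transpose_apply, hW, Matrix.of_apply, Matrix.one_apply]
    rw [show (∑ x : Fin m, b (Fin.castLE hkm i) x * b (Fin.castLE hkm j) x)
      = (if Fin.castLE hkm i = Fin.castLE hkm j then (1:ℝ) else 0) from hd]
    congr 1
    simp only [eq_iff_iff]
    exact ⟨fun h => by simpa [Fin.ext_iff] using h, fun h => by simpa [Fin.ext_iff] using h⟩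
  have hVst : star V = Vᵀ := by rw [Matrix.star_eq_conjTranspose, real_transpose_eq]
  have hVVt : V * Vᵀ = 1 := by
    rw [← hVst]; exact Matrix.mem_unitaryGroup_iff.mp hH.eigenvectorUnitary.2
  have hVtV : Vᵀ * V = 1 := by
    rw [← hVst]; exact Matrix.mem_unitaryGroup_iff'.mp hH.eigenvectorUnitary.2
  -- column identity : C * V = W * D
  have hcol : C * V = W * D := by
    ext a i
    have hVai : ∀ c : Fin k, V c i = v i c := fun c => rfl
    have lhs : (C * V) a i = (C *ᵥ v i) a := by
      simp [Matrix.mul_apply, Matrix.mulVec, dotProduct, hVai]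
    have rhs : (W * D) a i = W a i * Real.sqrt (μ i) := by
      rw [hD, Matrix.mul_diagonal]
    rw [lhs, rhs]
    rcases lt_or_eq_of_le (hμ0 i) with hi | hi
    · have hbw' : W a i = w i a := by simp only [hW, Matrix.of_apply, hbw i hi]
      have hwa : w i a = (Real.sqrt (μ i))⁻¹ * (C *ᵥ v i) a := rfl
      rw [hbw', hwa, mul_right_comm, inv_mul_cancel₀ (ne_of_gt (Real.sqrt_pos.mpr hi)), one_mul]
    · have h0 : (C *ᵥ v i) ⬝ᵥ (C *ᵥ v i) = 0 := by rw [key i i, ← hi]; ring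
      have hz := dotProduct_self_eq_zero.mp h0
      rw [hz, ← hi, Real.sqrt_zero, mul_zero]
      simp
  refine ⟨W * Vᵀ, ?_, ?_⟩
  · rw [Matrix.transpose_mul, Matrix.transpose_transpose, Matrix.mul_assoc,
      ← Matrix.mul_assoc Wᵀ, hWW, Matrix.one_mul, hVVt]
  · have hμreal : (RCLike.ofReal ∘ μ : Fin k → ℝ) = μ := by funext x; simp
    have hspec : V * Matrix.diagonal μ * Vᵀ = Cᵀ * C := by
      rw [← hVst, ← hμreal]; exact hH.spectral_theorem.symm
    have hDD : D * D = Matrix.diagonal μ := by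
      rw [hD, Matrix.diagonal_mul_diagonal,
        show (fun i => Real.sqrt (μ i) * Real.sqrt (μ i)) = μ
          from funext fun i => Real.mul_self_sqrt (hμ0 i)]
    have hsqrt : V * D * Vᵀ = (tmul_psd C).sqrt := by
      have hPSD : (V * D * Vᵀ).PosSemidef := by
        have := (Matrix.PosSemidef.diagonal
          (fun i => Real.sqrt_nonneg (μ i))).mul_mul_conjTranspose_same V
        rwa [real_transpose_eq] at this
      refine hPSD.eq_sqrt_of_sq_eq hG ?_
      rw [pow_two, mul_assoc (V*D) Vᵀ (V*D*Vᵀ), ← mul_assoc Vᵀ (V*D) Vᵀ,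
        ← mul_assoc Vᵀ V D, hVtV, one_mul, ← mul_assoc (V*D) D Vᵀ, mul_assoc V D D, hDD]
      exact hspec
    rw [← hsqrt, Matrix.mul_assoc W Vᵀ (V*D*Vᵀ), ← Matrix.mul_assoc Vᵀ (V*D) Vᵀ,
      ← Matrix.mul_assoc Vᵀ V D, hVtV, Matrix.one_mul, ← Matrix.mul_assoc W D Vᵀ, ← hcol,
      Matrix.mul_assoc C V Vᵀ, hVVt, Matrix.mul_one]

end StmtAux


open StmtAux in
/-- The minimum of `‖X - Z Lᵀ‖_F²` over `Z` with orthonormal columns equals the squared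
Bures-Wasserstein distance between `Xᵀ X` and `L Lᵀ`. -/
theorem stmt4 {N P K : ℕ} (hKN : K ≤ N) (hKP : K ≤ P)
    (X : Matrix (Fin N) (Fin P) ℝ) (L : Matrix (Fin P) (Fin K) ℝ) :
    ∃ Z₀ : Matrix (Fin N) (Fin K) ℝ, Z₀.transpose * Z₀ = 1 ∧
      frobSq (X - Z₀ * L.transpose) = BWsq (X.transpose * X) (L * L.transpose) ∧
      ∀ Z : Matrix (Fin N) (Fin K) ℝ, Z.transpose * Z = 1 →
        BWsq (X.transpose * X) (L * L.transpose) ≤ frobSq (X - Z * L.transpose) := by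
  have hA := tmul_psd X
  set R : Matrix (Fin P) (Fin P) ℝ := hA.sqrt with hRdef
  have hRt : Rᵀ = R := psd_transpose hA.posSemidef_sqrt
  have hRR : R * R = Xᵀ * X := hA.sqrt_mul_self
  set C : Matrix (Fin P) (Fin K) ℝ := R * L with hCdef
  set M : Matrix (Fin N) (Fin K) ℝ := X * L with hMdef
  have hMC : Mᵀ * M = Cᵀ * C := by
    calc Mᵀ * M = Lᵀ * Xᵀ * (X * L) := by rw [hMdef, Matrix.transpose_mul]
      _ = Lᵀ * (Xᵀ * X) * L := by
          rw [← Matrix.mul_assoc (Lᵀ * Xᵀ) X L, Matrix.mul_assoc Lᵀ Xᵀ X]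
      _ = Lᵀ * (R * R) * L := by rw [hRR]
      _ = (Lᵀ * R) * (R * L) := by
          rw [← Matrix.mul_assoc Lᵀ R R, Matrix.mul_assoc (Lᵀ * R) R L]
      _ = Cᵀ * C := by rw [hCdef, Matrix.transpose_mul, hRt]
  obtain ⟨Z₀, hZ₀, hMdec⟩ := exists_polar hKN M
  obtain ⟨U, hU, hCdec⟩ := exists_polar hKP C
  set S : Matrix (Fin K) (Fin K) ℝ := (tmul_psd M).sqrt with hSdef
  have hS01 : S = (tmul_psd C).sqrt := sqrt_congr hMC _ _
  have hSpsd : S.PosSemidef := (tmul_psd M).posSemidef_sqrt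
  have hSt : Sᵀ = S := psd_transpose hSpsd
  -- identify msqrt A * (L Lᵀ) * msqrt A with C Cᵀ
  have hmid : msqrt (Xᵀ * X) * (L * Lᵀ) * msqrt (Xᵀ * X) = C * Cᵀ := by
    rw [msqrt_eq hA, ← hRdef]
    calc R * (L * Lᵀ) * R = (R * L) * (Lᵀ * R) := by
          rw [← Matrix.mul_assoc R L Lᵀ, Matrix.mul_assoc (R * L) Lᵀ R]
      _ = C * Cᵀ := by rw [hCdef, Matrix.transpose_mul, hRt]
  have hCCt : (C * Cᵀ).PosSemidef := by
    have := tmul_psd Cᵀ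
    rwa [Matrix.transpose_transpose] at this
  -- sqrt of C Cᵀ is U S Uᵀ
  have hUSU : U * S * Uᵀ = hCCt.sqrt := by
    rw [hS01]
    have hPSD : (U * (tmul_psd C).sqrt * Uᵀ).PosSemidef := by
      have := (tmul_psd C).posSemidef_sqrt.mul_mul_conjTranspose_same U
      rwa [real_transpose_eq] at this
    refine hPSD.eq_sqrt_of_sq_eq hCCt ?_
    set S₁ := (tmul_psd C).sqrt with hS1def
    have hS1t : S₁ᵀ = S₁ := psd_transpose (tmul_psd C).posSemidef_sqrt
    rw [pow_two, Matrix.mul_assoc (U * S₁) Uᵀ (U * S₁ * Uᵀ),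
      ← Matrix.mul_assoc Uᵀ (U * S₁) Uᵀ, ← Matrix.mul_assoc Uᵀ U S₁, hU, Matrix.one_mul]
    rw [hCdec, Matrix.transpose_mul, hS1t]
  -- traces
  have htrace1 : (msqrt (C * Cᵀ)).trace = S.trace := by
    rw [msqrt_eq hCCt, ← hUSU, Matrix.trace_mul_cycle, hU, Matrix.one_mul]
  have htrace0 : (Z₀ᵀ * M).trace = S.trace := by
    rw [hMdec, ← Matrix.mul_assoc Z₀ᵀ Z₀ S, hZ₀, Matrix.one_mul]
  have hBW : BWsq (Xᵀ * X) (L * Lᵀ) =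
      (Xᵀ * X).trace + (L * Lᵀ).trace - 2 * S.trace := by
    rw [BWsq, hmid, htrace1]
    ring
  refine ⟨Z₀, hZ₀, ?_, ?_⟩
  · rw [frob_expand X L Z₀ hZ₀, hBW, ← hMdef, htrace0]
  · intro Z hZ
    rw [frob_expand X L Z hZ, hBW, ← hMdef]
    have hle : (Zᵀ * M).trace ≤ S.trace := by
      rw [hMdec, ← Matrix.mul_assoc Zᵀ Z₀ S]
      exact trace_mul_le Z Z₀ hZ hZ₀ hSpsd
    linarith
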